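/- Under the assumptions: (a) M ∈ ℝ^{N×N} is symmetric positive definite with condition number κ and M-norm ‖Z‖_M² = tr(Zᵀ M Z) on ℝ^{N×p}; (b) the row indices {1,…,N} are partitioned into n nonempty disjoint blocks, T : ℝ^{N×p} → ℝ^{N×p} is nonexpansive with respect to ‖·‖_M, S = I − T, and S_i Ẑ denotes the block-i restriction of S Ẑ; (c) Z* satisfies TZ* = Z*; (d) q_1,…,q_n > 0 satisfy Σ_i q_i = 1, q_min = min_i q_i; (e) τ ≥ 1, Z^{k−τ},…,Z^k ∈ ℝ^{N×p}, J ⊆ {k−τ,…,k−1}, Ẑ = Z^k + Σ_{d∈J}(Z^d − Z^{d+1}); and (f) the step size satisfies 0 < η < n·q_min/(2τ·√(κ·q_min) + κ); set c = √(q_min/κ) and Z^{k+1,i} = Z^k − (η/(n q_i)) S_i Ẑ. Then Σ_{i=1}^n q_i · [ ‖Z^{k+1,i} − Z*‖_M² + c·Σ_{d=k+1−τ}^{k−1} (d−(k+1−τ)+1)·‖Z^d − Z^{d+1}‖_M² + c·τ·‖Z^k − Z^{k+1,i}‖_M² ] ≤ ‖Z^k − Z*‖_M² + c·Σ_{d=k−τ}^{k−1}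 (d−(k−τ)+1)·‖Z^d − Z^{d+1}‖_M²; i.e., the sequence of stacked iterates is stochastically Fejér monotone in the U-metric. -/

import Mathlib

open Matrix

/-- The squared `M`-norm `‖Z‖_M² = tr(Zᵀ M Z)` on `ℝ^{N×p}`. -/
noncomputable def Mnorm2 {N p : ℕ} (M : Matrix (Fin N) (Fin N) ℝ)
    (Z : Matrix (Fin N) (Fin p) ℝ) : ℝ :=
  (Zᵀ * M * Z).trace

/-- `blockRestrict b i A` agrees with `A` on the rows in block `i` (rows `j` with
`b j = i`) and is zero elsewhere. -/
def blockRestrict {N p n : ℕ} (b : Fin N → Fin n) (i : Fin n)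
    (A : Matrix (Fin N) (Fin p) ℝ) : Matrix (Fin N) (Fin p) ℝ :=
  Matrix.of fun j l => if b j = i then A j l else 0

variable {N p : ℕ}

noncomputable def mip (M : Matrix (Fin N) (Fin N) ℝ) (X Y : Matrix (Fin N) (Fin p) ℝ) : ℝ :=
  (Xᵀ * M * Y).trace

lemma mip_symm (M : Matrix (Fin N) (Fin N) ℝ) (hM : Mᵀ = M) (X Y : Matrix (Fin N) (Fin p) ℝ) :
    mip M X Y = mip M Y X := by
  unfold mip
  rw [← Matrix.trace_transpose, Matrix.transpose_mul, Matrix.transpose_mul,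
    Matrix.transpose_transpose, hM, ← Matrix.mul_assoc]

lemma mip_sub_left (M : Matrix (Fin N) (Fin N) ℝ) (X Y Z : Matrix (Fin N) (Fin p) ℝ) :
    mip M (X - Y) Z = mip M X Z - mip M Y Z := by
  unfold mip; rw [Matrix.transpose_sub, Matrix.sub_mul, Matrix.sub_mul, Matrix.trace_sub]

lemma mip_sub_right (M : Matrix (Fin N) (Fin N) ℝ) (X Y Z : Matrix (Fin N) (Fin p) ℝ) :
    mip M X (Y - Z) = mip M X Y - mip M X Z := by
  unfold mip; rw [Matrix.mul_sub, Matrix.trace_sub]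

lemma mip_add_right (M : Matrix (Fin N) (Fin N) ℝ) (X Y Z : Matrix (Fin N) (Fin p) ℝ) :
    mip M X (Y + Z) = mip M X Y + mip M X Z := by
  unfold mip; rw [Matrix.mul_add, Matrix.trace_add]

lemma mip_smul_right (M : Matrix (Fin N) (Fin N) ℝ) (a : ℝ) (X Y : Matrix (Fin N) (Fin p) ℝ) :
    mip M X (a • Y) = a * mip M X Y := by
  unfold mip; rw [Matrix.mul_smul, Matrix.trace_smul]; rfl

lemma mip_sum_right (M : Matrix (Fin N) (Fin N) ℝ) {α : Type*} (s : Finset α)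
    (X : Matrix (Fin N) (Fin p) ℝ) (Y : α → Matrix (Fin N) (Fin p) ℝ) :
    mip M X (∑ a ∈ s, Y a) = ∑ a ∈ s, mip M X (Y a) := by
  unfold mip; rw [Matrix.mul_sum, Matrix.trace_sum]

lemma Mnorm2_eq_mip (M : Matrix (Fin N) (Fin N) ℝ) (X : Matrix (Fin N) (Fin p) ℝ) :
    Mnorm2 M X = mip M X X := rfl
lemma mip_smul_left (M : Matrix (Fin N) (Fin N) ℝ) (a : ℝ) (X Y : Matrix (Fin N) (Fin p) ℝ) :
    mip M (a • X) Y = a * mip M X Y := by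
  unfold mip
  rw [Matrix.transpose_smul, Matrix.smul_mul, Matrix.smul_mul, Matrix.trace_smul]; rfl

lemma Mnorm2_sub_expand (M : Matrix (Fin N) (Fin N) ℝ) (hM : Mᵀ = M)
    (X Y : Matrix (Fin N) (Fin p) ℝ) :
    Mnorm2 M (X - Y) = Mnorm2 M X - 2 * mip M X Y + Mnorm2 M Y := by
  rw [Mnorm2_eq_mip, mip_sub_left, mip_sub_right, mip_sub_right, mip_symm M hM Y X,
    Mnorm2_eq_mip, Mnorm2_eq_mip]
  ring

lemma Mnorm2_smul (M : Matrix (Fin N) (Fin N) ℝ) (a : ℝ) (X : Matrix (Fin N) (Fin p) ℝ) :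
    Mnorm2 M (a • X) = a ^ 2 * Mnorm2 M X := by
  rw [Mnorm2_eq_mip, mip_smul_left, mip_smul_right, Mnorm2_eq_mip]; ring

/-- `Mnorm2` as a sum of column quadratic forms. -/
lemma Mnorm2_eq_sum_cols (M : Matrix (Fin N) (Fin N) ℝ) (X : Matrix (Fin N) (Fin p) ℝ) :
    Mnorm2 M X = ∑ l, (fun j => X j l) ⬝ᵥ (M *ᵥ fun j => X j l) := by
  unfold Mnorm2
  simp only [Matrix.trace, Matrix.diag_apply, Matrix.mul_apply, Matrix.mulVec, dotProduct,
    Finset.sum_mul, Finset.mul_sum]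
  refine Finset.sum_congr rfl fun l _ => ?_
  rw [Finset.sum_comm]
  refine Finset.sum_congr rfl fun j _ => Finset.sum_congr rfl fun j' _ => ?_
  simp [Matrix.transpose_apply]; ring

lemma Mnorm2_nonneg (M : Matrix (Fin N) (Fin N) ℝ) (hM : M.PosSemidef)
    (X : Matrix (Fin N) (Fin p) ℝ) : 0 ≤ Mnorm2 M X := by
  rw [Mnorm2_eq_sum_cols]
  refine Finset.sum_nonneg fun l _ => ?_
  simpa using hM.dotProduct_mulVec_nonneg (fun j => X j l)

lemma neg_mip_le (M : Matrix (Fin N) (Fin N) ℝ) (hM : M.PosSemidef) (ρ : ℝ) (hρ : 0 < ρ)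
    (X Y : Matrix (Fin N) (Fin p) ℝ) :
    -mip M X Y ≤ Mnorm2 M X / (2 * ρ) + ρ * Mnorm2 M Y / 2 := by
  have h0 : (0:ℝ) ≤ Mnorm2 M (X - (-ρ) • Y) := Mnorm2_nonneg M hM _
  rw [Mnorm2_sub_expand M hM.1 X _, mip_smul_right, Mnorm2_smul] at h0
  have hx := Mnorm2_nonneg M hM X
  have hy := Mnorm2_nonneg M hM Y
  rw [div_add_div _ _ (by positivity) (by norm_num), le_div_iff₀ (by positivity)]
  nlinarith [sq_nonneg ρ, mul_pos hρ hρ]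
/-- The quadratic form of a Hermitian real matrix is bounded by its extreme eigenvalues. -/
lemma quad_form_bounds {N : ℕ} (M : Matrix (Fin N) (Fin N) ℝ) (hM : M.IsHermitian)
    (lmax lmin : ℝ)
    (hlmax : ∀ j, hM.eigenvalues j ≤ lmax) (hlmin : ∀ j, lmin ≤ hM.eigenvalues j)
    (v : Fin N → ℝ) :
    lmin * (v ⬝ᵥ v) ≤ v ⬝ᵥ (M *ᵥ v) ∧ v ⬝ᵥ (M *ᵥ v) ≤ lmax * (v ⬝ᵥ v) := by
  classical
  set U : Matrix (Fin N) (Fin N) ℝ := (hM.eigenvectorUnitary : Matrix (Fin N) (Fin N) ℝ) with hU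
  set w : Fin N → ℝ := star U *ᵥ v with hw
  have hU1 : U * star U = 1 := (Matrix.mem_unitaryGroup_iff).mp hM.eigenvectorUnitary.2
  have hquad : v ⬝ᵥ (M *ᵥ v) = ∑ j, hM.eigenvalues j * (w j)^2 := by
    conv_lhs => rw [hM.spectral_theorem, Unitary.conjStarAlgAut_apply]
    rw [← Matrix.mulVec_mulVec, ← Matrix.mulVec_mulVec, Matrix.dotProduct_mulVec v U,
      ← Matrix.mulVec_transpose]
    have hUt : Uᵀ = star U := by
      rw [Matrix.star_eq_conjTranspose, Matrix.conjTranspose_eq_transpose_of_trivial]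
    rw [hUt, ← hw]
    simp only [Matrix.mulVec_diagonal, dotProduct, Matrix.mulVec, Matrix.diagonal_apply,
      Function.comp_apply, RCLike.ofReal_real_eq_id, id_eq]
    refine Finset.sum_congr rfl fun j _ => ?_
    rw [Finset.sum_eq_single j (fun b _ hb => by simp [if_neg (Ne.symm hb)]) (by simp)]
    simp; ring
  have hnorm : w ⬝ᵥ w = v ⬝ᵥ v := by
    rw [hw, Matrix.dotProduct_mulVec (star U *ᵥ v) (star U) v, ← Matrix.mulVec_transpose]
    have : (star U)ᵀ = U := by
      rw [Matrix.star_eq_conjTranspose, Matrix.conjTranspose_eq_transpose_of_trivial,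
        Matrix.transpose_transpose]
    rw [this, Matrix.mulVec_mulVec, hU1, Matrix.one_mulVec]
  have hww : w ⬝ᵥ w = ∑ j, (w j)^2 := by
    simp [dotProduct, sq]
  constructor
  · rw [hquad, ← hnorm, hww, Finset.mul_sum]
    exact Finset.sum_le_sum fun j _ => mul_le_mul_of_nonneg_right (hlmin j) (sq_nonneg _)
  · rw [hquad, ← hnorm, hww, Finset.mul_sum]
    exact Finset.sum_le_sum fun j _ => mul_le_mul_of_nonneg_right (hlmax j) (sq_nonneg _)

/-- Squared Frobenius norm. -/
noncomputable def frob {N p : ℕ} (X : Matrix (Fin N) (Fin p) ℝ) : ℝ := ∑ l, ∑ j, (X j l)^2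

lemma frob_nonneg {N p : ℕ} (X : Matrix (Fin N) (Fin p) ℝ) : 0 ≤ frob X :=
  Finset.sum_nonneg fun _ _ => Finset.sum_nonneg fun _ _ => sq_nonneg _

lemma Mnorm2_bounds (M : Matrix (Fin N) (Fin N) ℝ) (hM : M.IsHermitian)
    (lmax lmin : ℝ)
    (hlmax : ∀ j, hM.eigenvalues j ≤ lmax) (hlmin : ∀ j, lmin ≤ hM.eigenvalues j)
    (X : Matrix (Fin N) (Fin p) ℝ) :
    lmin * frob X ≤ Mnorm2 M X ∧ Mnorm2 M X ≤ lmax * frob X := by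
  have hcol : ∀ l, (fun j => X j l) ⬝ᵥ (fun j => X j l) = ∑ j, (X j l)^2 := by
    intro l; simp [dotProduct, sq]
  constructor
  · rw [Mnorm2_eq_sum_cols, frob, Finset.mul_sum]
    refine Finset.sum_le_sum fun l _ => ?_
    rw [← hcol l]
    exact (quad_form_bounds M hM lmax lmin hlmax hlmin _).1
  · rw [Mnorm2_eq_sum_cols, frob, Finset.mul_sum]
    refine Finset.sum_le_sum fun l _ => ?_
    rw [← hcol l]
    exact (quad_form_bounds M hM lmax lmin hlmax hlmin _).2

lemma sum_blockRestrict {N p n : ℕ} (b : Fin N → Fin n) (A : Matrix (Fin N) (Fin p) ℝ) :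
    ∑ i, blockRestrict b i A = A := by
  ext j l
  rw [Matrix.sum_apply]
  simp [blockRestrict]

lemma sum_frob_blockRestrict {N p n : ℕ} (b : Fin N → Fin n) (A : Matrix (Fin N) (Fin p) ℝ) :
    ∑ i, frob (blockRestrict b i A) = frob A := by
  unfold frob
  rw [Finset.sum_comm]
  refine Finset.sum_congr rfl fun l _ => ?_
  rw [Finset.sum_comm]
  refine Finset.sum_congr rfl fun j _ => ?_
  simp [blockRestrict, apply_ite (fun x : ℝ => x^2)]
lemma mip_le_bound (M : Matrix (Fin N) (Fin N) ℝ) (hM : M.PosSemidef) (ρ : ℝ) (hρ : 0 < ρ)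
    (X Y : Matrix (Fin N) (Fin p) ℝ) :
    mip M X Y ≤ Mnorm2 M X / (2 * ρ) + ρ * Mnorm2 M Y / 2 := by
  have h0 : (0:ℝ) ≤ Mnorm2 M (X - ρ • Y) := Mnorm2_nonneg M hM _
  rw [Mnorm2_sub_expand M hM.1 X _, mip_smul_right, Mnorm2_smul] at h0
  rw [div_add_div _ _ (by positivity) (by norm_num), le_div_iff₀ (by positivity)]
  nlinarith [sq_nonneg ρ, mul_pos hρ hρ]


set_option maxHeartbeats 2000000 in
/-- **Stochastic Fejér monotonicity in the U-metric.**  Under the step-size bound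
`0 < η < n qmin / (2τ√(κ qmin) + κ)` with `κ = lmax/lmin` and `c = √(qmin/κ)`,
the conditional expectation of the squared U-distance of the stacked iterate to
any fixed point `Z*` is nonincreasing:
`Σᵢ qᵢ [ ‖Z^{k+1,i} - Z*‖²_M + c Σ_{d=k+1-τ}^{k-1} (d-(k+1-τ)+1)‖Z^d - Z^{d+1}‖²_M
        + c τ ‖Z^k - Z^{k+1,i}‖²_M ]
  ≤ ‖Z^k - Z*‖²_M + c Σ_{d=k-τ}^{k-1} (d-(k-τ)+1)‖Z^d - Z^{d+1}‖²_M`. -/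
theorem stochastic_fejer_monotonicity (N p n : ℕ)
    (M : Matrix (Fin N) (Fin N) ℝ) (hM : M.PosDef)
    (lmax lmin : ℝ)
    (hlmax : IsGreatest (Set.range hM.isHermitian.eigenvalues) lmax)
    (hlmin : IsLeast (Set.range hM.isHermitian.eigenvalues) lmin)
    (b : Fin N → Fin n) (hb : Function.Surjective b)
    (T : Matrix (Fin N) (Fin p) ℝ → Matrix (Fin N) (Fin p) ℝ)
    (hT : ∀ X Y : Matrix (Fin N) (Fin p) ℝ,
      Mnorm2 M (T X - T Y) ≤ Mnorm2 M (X - Y))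
    (Zstar : Matrix (Fin N) (Fin p) ℝ) (hfix : T Zstar = Zstar)
    (q : Fin n → ℝ) (hq : ∀ i, 0 < q i) (hqsum : ∑ i, q i = 1)
    (qmin : ℝ) (hqmin : IsLeast (Set.range q) qmin)
    (τ k : ℕ) (hτ : 1 ≤ τ) (hτk : τ ≤ k)
    (Z : ℕ → Matrix (Fin N) (Fin p) ℝ)
    (J : Finset ℕ) (hJ : J ⊆ Finset.Ico (k - τ) k)
    (Zhat : Matrix (Fin N) (Fin p) ℝ)
    (hZhat : Zhat = Z k + ∑ d ∈ J, (Z d - Z (d + 1)))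
    (η : ℝ) (hη : 0 < η)
    (hηbound : η < (n : ℝ) * qmin /
      (2 * (τ : ℝ) * Real.sqrt ((lmax / lmin) * qmin) + lmax / lmin))
    (c : ℝ) (hc : c = Real.sqrt (qmin / (lmax / lmin)))
    (Znext : Fin n → Matrix (Fin N) (Fin p) ℝ)
    (hZnext : ∀ i, Znext i = Z k - (η / ((n : ℝ) * q i)) • blockRestrict b i (Zhat - T Zhat)) :
    ∑ i, q i *
        (Mnorm2 M (Znext i - Zstar)
          + c * ∑ d ∈ Finset.Ico (k + 1 - τ) k,
              ((d - (k + 1 - τ) + 1 : ℕ) : ℝ) * Mnorm2 M (Z d - Z (d + 1))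
          + c * (τ : ℝ) * Mnorm2 M (Z k - Znext i))
      ≤ Mnorm2 M (Z k - Zstar)
        + c * ∑ d ∈ Finset.Ico (k - τ) k,
            ((d - (k - τ) + 1 : ℕ) : ℝ) * Mnorm2 M (Z d - Z (d + 1)) := by

  classical
  -- basic positivity facts
  have hpsd : M.PosSemidef := hM.posSemidef
  have hMt : Mᵀ = M := by
    have := hM.isHermitian.eq
    rwa [Matrix.conjTranspose_eq_transpose_of_trivial] at this
  have hevpos : ∀ j, 0 < hM.isHermitian.eigenvalues j := hM.eigenvalues_pos
  have hub : ∀ j, hM.isHermitian.eigenvalues j ≤ lmax := fun j => hlmax.2 ⟨j, rfl⟩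
  have hlb : ∀ j, lmin ≤ hM.isHermitian.eigenvalues j := fun j => hlmin.2 ⟨j, rfl⟩
  have hlminpos : 0 < lmin := by
    obtain ⟨j, hj⟩ := hlmin.1; rw [← hj]; exact hevpos j
  have hlmaxpos : 0 < lmax := by
    obtain ⟨j, hj⟩ := hlmax.1; rw [← hj]; exact hevpos j
  have hqminpos : 0 < qmin := by
    obtain ⟨i, hi⟩ := hqmin.1; rw [← hi]; exact hq i
  have hqminle : ∀ i, qmin ≤ q i := fun i => hqmin.2 ⟨i, rfl⟩
  have hn : 0 < n := by
    rcases Nat.eq_zero_or_pos n with h | h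
    · subst h; simp at hqsum
    · exact h
  have hm : (0:ℝ) < (n:ℝ) := Nat.cast_pos.mpr hn
  have hκ : 0 < lmax / lmin := div_pos hlmaxpos hlminpos
  have hcpos : 0 < c := by rw [hc]; exact Real.sqrt_pos.mpr (by positivity)
  have hκc : (lmax / lmin) * c ^ 2 = qmin := by
    rw [hc, Real.sq_sqrt (by positivity)]; field_simp
  set τℝ : ℝ := (τ : ℝ) with hτℝ
  have hτℝ1 : 1 ≤ τℝ := by rw [hτℝ]; exact_mod_cast hτ
  set a : ℝ := η / (n:ℝ) with ha
  have hapos : 0 < a := div_pos hη hm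
  have ham : a * (n:ℝ) = η := by rw [ha]; field_simp
  -- notation
  set SZ : Matrix (Fin N) (Fin p) ℝ := Zhat - T Zhat with hSZ
  set s : ℝ := Mnorm2 M SZ with hsdef
  have hs : 0 ≤ s := Mnorm2_nonneg M hpsd SZ
  set ZZ : Matrix (Fin N) (Fin p) ℝ := Z k - Zstar with hZZ
  set nZ : ℝ := Mnorm2 M ZZ with hnZ
  set DD : ℕ → ℝ := fun d => Mnorm2 M (Z d - Z (d+1)) with hDDdef
  have hDD : ∀ d, 0 ≤ DD d := fun d => Mnorm2_nonneg M hpsd _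
  set P : ℝ := mip M ZZ SZ with hP
  set Bn : Fin n → ℝ := fun i => Mnorm2 M (blockRestrict b i SZ) with hBndef
  have hBn0 : ∀ i, 0 ≤ Bn i := fun i => Mnorm2_nonneg M hpsd _
  set A : ℝ := ∑ i, q i * (η / ((n:ℝ) * q i))^2 * Bn i with hAdef
  set δ : ℝ := ∑ d ∈ Finset.Ico (k - τ) k, DD d with hδdef
  have hδ0 : 0 ≤ δ := Finset.sum_nonneg fun d _ => hDD d
  set W1 : ℝ := ∑ d ∈ Finset.Ico (k + 1 - τ) k, ((d - (k + 1 - τ) + 1 : ℕ) : ℝ) * DD d with hW1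
  set W0 : ℝ := ∑ d ∈ Finset.Ico (k - τ) k, ((d - (k - τ) + 1 : ℕ) : ℝ) * DD d with hW0
  clear_value τℝ a SZ s ZZ nZ DD P Bn A δ W1 W0
  -- step-size key inequality : a * (2 τ c + 1) < c ^ 2
  have hkey3 : a * (2 * τℝ * c + 1) < c ^ 2 := by
    have hS : Real.sqrt ((lmax / lmin) * qmin) * c = qmin := by
      rw [hc, ← Real.sqrt_mul (by positivity)]
      rw [show (lmax / lmin * qmin) * (qmin / (lmax / lmin)) = qmin ^ 2 by
        field_simp]
      exact Real.sqrt_sq hqminpos.le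
    have hD : 0 < 2 * τℝ * Real.sqrt ((lmax / lmin) * qmin) + lmax / lmin := by
      have h1 : 0 ≤ 2 * τℝ * Real.sqrt ((lmax / lmin) * qmin) := by positivity
      linarith
    have hb1 : η * (2 * τℝ * Real.sqrt ((lmax / lmin) * qmin) + lmax / lmin)
        < (n:ℝ) * qmin := (lt_div_iff₀ hD).mp hηbound
    have h2 := mul_lt_mul_of_pos_right hb1 (show (0:ℝ) < c ^ 2 by positivity)
    have hmq : 0 < (n:ℝ) * qmin := by positivity
    have h4 : ((n:ℝ) * qmin) * (a * (2 * τℝ * c + 1)) < ((n:ℝ) * qmin) * c ^ 2 := by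
      calc ((n:ℝ) * qmin) * (a * (2 * τℝ * c + 1))
          = η * (2 * τℝ * Real.sqrt ((lmax / lmin) * qmin) + lmax / lmin) * c ^ 2 := by
            rw [← ham]
            linear_combination (-(2 * τℝ * a * (n:ℝ) * c)) * hS + (-(a * (n:ℝ))) * hκc
        _ < ((n:ℝ) * qmin) * c ^ 2 := h2
    exact lt_of_mul_lt_mul_left h4 hmq.le
  -- expansion of the update
  have hexp : ∀ i, Mnorm2 M (Znext i - Zstar)
      = nZ - 2 * (η / ((n:ℝ) * q i)) * mip M ZZ (blockRestrict b i SZ)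
        + (η / ((n:ℝ) * q i))^2 * Bn i := by
    intro i
    have h1 : Znext i - Zstar = ZZ - (η / ((n:ℝ) * q i)) • blockRestrict b i SZ := by
      rw [hZnext i, hZZ, hSZ]; abel
    rw [h1, Mnorm2_sub_expand M hMt, mip_smul_right, Mnorm2_smul]
    simp only [hnZ, hBndef]; ring
  have hF : ∀ i, Mnorm2 M (Z k - Znext i) = (η / ((n:ℝ) * q i))^2 * Bn i := by
    intro i
    have h1 : Z k - Znext i = (η / ((n:ℝ) * q i)) • blockRestrict b i SZ := by
      rw [hZnext i]; abel
    rw [h1, Mnorm2_smul]; simp only [hBndef]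
  have hqa : ∀ i, q i * (η / ((n:ℝ) * q i)) = a := by
    intro i; rw [ha]; field_simp [(hq i).ne']
  -- weighted sums
  have hsum1 : ∑ i, q i * Mnorm2 M (Znext i - Zstar) = nZ - 2 * a * P + A := by
    calc ∑ i, q i * Mnorm2 M (Znext i - Zstar)
        = ∑ i, (q i * nZ - 2 * a * mip M ZZ (blockRestrict b i SZ)
            + q i * (η / ((n:ℝ) * q i))^2 * Bn i) := by
          refine Finset.sum_congr rfl fun i _ => ?_
          rw [hexp i]
          linear_combination (-2 * mip M ZZ (blockRestrict b i SZ)) * hqa i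
      _ = (∑ i, q i * nZ) - (∑ i, 2 * a * mip M ZZ (blockRestrict b i SZ))
            + ∑ i, q i * (η / ((n:ℝ) * q i))^2 * Bn i := by
          rw [Finset.sum_add_distrib, Finset.sum_sub_distrib]
      _ = nZ - 2 * a * P + A := by
          rw [← Finset.sum_mul, hqsum, one_mul, ← Finset.mul_sum, ← mip_sum_right,
            sum_blockRestrict, ← hP, hAdef]
  have hsum2 : ∑ i, q i * Mnorm2 M (Z k - Znext i) = A := by
    rw [hAdef]
    refine Finset.sum_congr rfl fun i _ => ?_
    rw [hF i]; ring
  -- bound on A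
  have hA2 : A * c ^ 2 ≤ a ^ 2 * s := by
    have hterm : ∀ i : Fin n, q i * (η / ((n:ℝ) * q i))^2 * Bn i
        ≤ (a ^ 2 / qmin) * Bn i := by
      intro i
      have h1 : q i * (η / ((n:ℝ) * q i))^2 = a ^ 2 / q i := by
        rw [ha]; field_simp [(hq i).ne']
      rw [h1]
      apply mul_le_mul_of_nonneg_right _ (hBn0 i)
      exact div_le_div_of_nonneg_left (by positivity) hqminpos (hqminle i)
    have hsumBn : ∑ i, Bn i ≤ (lmax / lmin) * s := by
      have h1 : ∀ i : Fin n, Bn i ≤ lmax * frob (blockRestrict b i SZ) := by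
        intro i; rw [hBndef]
        exact (Mnorm2_bounds M hM.isHermitian lmax lmin hub hlb _).2
      have h2 : lmin * frob SZ ≤ s := by
        rw [hsdef]
        exact (Mnorm2_bounds M hM.isHermitian lmax lmin hub hlb _).1
      calc ∑ i, Bn i ≤ ∑ i, lmax * frob (blockRestrict b i SZ) :=
            Finset.sum_le_sum fun i _ => h1 i
        _ = lmax * frob SZ := by rw [← Finset.mul_sum, sum_frob_blockRestrict]
        _ ≤ (lmax / lmin) * s := by
            rw [div_mul_eq_mul_div, le_div_iff₀ hlminpos]
            nlinarith [frob_nonneg SZ]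
    have hA1 : A ≤ (a ^ 2 / qmin) * ((lmax / lmin) * s) := by
      calc A = ∑ i, q i * (η / ((n:ℝ) * q i))^2 * Bn i := hAdef
        _ ≤ ∑ i, (a ^ 2 / qmin) * Bn i := Finset.sum_le_sum fun i _ => hterm i
        _ = (a ^ 2 / qmin) * ∑ i, Bn i := by rw [Finset.mul_sum]
        _ ≤ (a ^ 2 / qmin) * ((lmax / lmin) * s) := by
            apply mul_le_mul_of_nonneg_left hsumBn (by positivity)
    calc A * c ^ 2 ≤ (a ^ 2 / qmin) * ((lmax / lmin) * s) * c ^ 2 := by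
          apply mul_le_mul_of_nonneg_right hA1 (by positivity)
      _ = a ^ 2 * s * ((lmax / lmin) * c ^ 2) / qmin := by ring
      _ = a ^ 2 * s := by rw [hκc]; field_simp
  -- lower bound on P
  have h1 : s / 2 ≤ mip M (Zhat - Zstar) SZ := by
    have h := hT Zhat Zstar
    rw [hfix] at h
    have he : T Zhat - Zstar = (Zhat - Zstar) - SZ := by rw [hSZ]; abel
    rw [he, Mnorm2_sub_expand M hMt, ← hsdef] at h
    linarith
  have hdecomp : P = mip M (Zhat - Zstar) SZ - ∑ d ∈ J, mip M (Z d - Z (d+1)) SZ := by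
    have he : ZZ = (Zhat - Zstar) - ∑ d ∈ J, (Z d - Z (d+1)) := by
      rw [hZZ, hZhat]; abel
    rw [hP, he, mip_sub_left, mip_symm M hMt (∑ d ∈ J, (Z d - Z (d+1))) SZ, mip_sum_right]
    congr 1
    exact Finset.sum_congr rfl fun d _ => (mip_symm M hMt _ SZ).symm
  have hcard : (J.card : ℝ) ≤ τℝ := by
    have h1 : J.card ≤ (Finset.Ico (k - τ) k).card := Finset.card_le_card hJ
    rw [Nat.card_Ico] at h1
    have h2 : k - (k - τ) = τ := by omega
    rw [h2] at h1
    rw [hτℝ]; exact_mod_cast h1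
  have hδJ : ∑ d ∈ J, DD d ≤ δ := by
    rw [hδdef]
    exact Finset.sum_le_sum_of_subset_of_nonneg hJ fun d _ _ => hDD d
  have hPsum : ∑ d ∈ J, mip M (Z d - Z (d+1)) SZ
      ≤ c / (2 * a) * δ + τℝ * (a / (2 * c) * s) := by
    have hterm : ∀ d ∈ J, mip M (Z d - Z (d+1)) SZ
        ≤ c / (2 * a) * DD d + a / (2 * c) * s := by
      intro d _
      have h := mip_le_bound M hpsd (a / c) (by positivity) (Z d - Z (d+1)) SZ
      have heq : DD d / (2 * (a / c)) + (a / c) * s / 2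
          = c / (2 * a) * DD d + a / (2 * c) * s := by
        field_simp
      have hDd : Mnorm2 M (Z d - Z (d+1)) = DD d := by simp only [hDDdef]
      rw [← hsdef, hDd] at h
      calc mip M (Z d - Z (d+1)) SZ ≤ DD d / (2 * (a / c)) + (a / c) * s / 2 := h
        _ = c / (2 * a) * DD d + a / (2 * c) * s := heq
    calc ∑ d ∈ J, mip M (Z d - Z (d+1)) SZ
        ≤ ∑ d ∈ J, (c / (2 * a) * DD d + a / (2 * c) * s) :=
          Finset.sum_le_sum hterm
      _ = c / (2 * a) * (∑ d ∈ J, DD d) + (J.card : ℝ) * (a / (2 * c) * s) := by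
          rw [Finset.sum_add_distrib, ← Finset.mul_sum, Finset.sum_const, nsmul_eq_mul]
      _ ≤ c / (2 * a) * δ + τℝ * (a / (2 * c) * s) := by
          have h1 : c / (2 * a) * (∑ d ∈ J, DD d) ≤ c / (2 * a) * δ :=
            mul_le_mul_of_nonneg_left hδJ (by positivity)
          have h2 : (J.card : ℝ) * (a / (2 * c) * s) ≤ τℝ * (a / (2 * c) * s) :=
            mul_le_mul_of_nonneg_right hcard (by positivity)
          linarith
  have hPlb : s / 2 - c / (2 * a) * δ - τℝ * (a / (2 * c) * s) ≤ P := by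
    rw [hdecomp]; linarith
  have hP3 : a * c * s - c ^ 2 * δ - τℝ * a ^ 2 * s ≤ 2 * a * c * P := by
    have h := mul_le_mul_of_nonneg_left hPlb (show (0:ℝ) ≤ 2 * a * c by positivity)
    have heq : 2 * a * c * (s / 2 - c / (2 * a) * δ - τℝ * (a / (2 * c) * s))
        = a * c * s - c ^ 2 * δ - τℝ * a ^ 2 * s := by
      field_simp
    linarith [heq ▸ h]
  -- index shifting identity
  have hWid : W0 = W1 + δ := by
    have hklt : k - τ < k := by omega
    have hk1 : k + 1 - τ = (k - τ) + 1 := by omega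
    have hins := Finset.insert_Ico_add_one_left_eq_Ico hklt
    rw [hW0, hW1, hδdef, hk1, ← hins, Finset.sum_insert (by simp), Finset.sum_insert (by simp)]
    have hwt : (k - τ - (k - τ) + 1 : ℕ) = 1 := by omega
    rw [hwt]
    have hcong : ∀ d ∈ Finset.Ico ((k - τ) + 1) k,
        ((d - (k - τ) + 1 : ℕ) : ℝ) * DD d
          = ((d - ((k - τ) + 1) + 1 : ℕ) : ℝ) * DD d + DD d := by
      intro d hd
      rw [Finset.mem_Ico] at hd
      have : (d - (k - τ) + 1 : ℕ) = (d - ((k - τ) + 1) + 1) + 1 := by omega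
      rw [this]; push_cast; ring
    rw [Finset.sum_congr rfl hcong, Finset.sum_add_distrib]
    push_cast; ring
  -- put everything together
  have hLHS : ∑ i, q i *
        (Mnorm2 M (Znext i - Zstar) + c * W1 + c * τℝ * Mnorm2 M (Z k - Znext i))
      = (∑ i, q i * Mnorm2 M (Znext i - Zstar)) + c * W1
        + c * τℝ * ∑ i, q i * Mnorm2 M (Z k - Znext i) := by
    calc ∑ i, q i * (Mnorm2 M (Znext i - Zstar) + c * W1 + c * τℝ * Mnorm2 M (Z k - Znext i))
        = ∑ i, (q i * Mnorm2 M (Znext i - Zstar) + c * W1 * q i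
            + c * τℝ * (q i * Mnorm2 M (Z k - Znext i))) := by
          refine Finset.sum_congr rfl fun i _ => ?_; ring
      _ = (∑ i, q i * Mnorm2 M (Znext i - Zstar)) + c * W1 * ∑ i, q i
            + c * τℝ * ∑ i, q i * Mnorm2 M (Z k - Znext i) := by
          rw [Finset.sum_add_distrib, Finset.sum_add_distrib, ← Finset.mul_sum,
            ← Finset.mul_sum]
      _ = _ := by rw [hqsum]; ring
  rw [hLHS, hsum1, hsum2, hWid]
  -- final arithmetic
  have hgoal : A + c * τℝ * A ≤ 2 * a * P + c * δ := by
    have hc2pos : (0:ℝ) < c ^ 2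
    · positivity
    rw [← mul_le_mul_iff_of_pos_right hc2pos]
    have hh1 := mul_le_mul_of_nonneg_right hP3 hcpos.le
    have hh2 : A * c ^ 2 * (1 + c * τℝ) ≤ a ^ 2 * s * (1 + c * τℝ) :=
      mul_le_mul_of_nonneg_right hA2 (by positivity)
    have hh3 : a * (2 * τℝ * c + 1) * (a * s) ≤ c ^ 2 * (a * s) :=
      mul_le_mul_of_nonneg_right hkey3.le (by positivity)
    linarith [hh1, hh2, hh3]
  linarith
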